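/- arXiv:2601.03970 — 2 statements merged into one kernel-verified Lean document; each statement's English description precedes it below -/
import Mathlib

section
/- For a semi-standard Young tableau L, the row-word of the labeled tableau φ_T(L) equals the labeling of the row-word of L: w_row(φ_T(L)) = φ_w(w_row(L)). -/
open scoped BigOperators

/-! ## Words and Knuth relations -/

/-- Knuth relation (K): `u·bca·v ~ u·bac·v` with `a < b ≤ c`. -/
def KnuthK {α : Type*} [LinearOrder α] (w w' : List α) : Prop :=
  ∃ (u v : List α) (a b c : α), a < b ∧ b ≤ c ∧
    w = u ++ [b, c, a] ++ v ∧ w' = u ++ [b, a, c] ++ v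

/-- Knuth relation (K'): `u·acb·v ~ u·cab·v` with `a ≤ b < c`. -/
def KnuthK' {α : Type*} [LinearOrder α] (w w' : List α) : Prop :=
  ∃ (u v : List α) (a b c : α), a ≤ b ∧ b < c ∧
    w = u ++ [a, c, b] ++ v ∧ w' = u ++ [c, a, b] ++ v

/-- One step of a Knuth relation, in either direction. -/
def KnuthRel {α : Type*} [LinearOrder α] (w w' : List α) : Prop :=
  KnuthK w w' ∨ KnuthK w' w ∨ KnuthK' w w' ∨ KnuthK' w' w

/-- Knuth equivalence: the reflexive-transitive closure of the Knuth relations. -/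
def KnuthEquiv {α : Type*} [LinearOrder α] : List α → List α → Prop :=
  Relation.ReflTransGen KnuthRel

/-- The labeled alphabet Ñ = ℕ ×ₗ ℕ, ordered first by the letter, then by the label. -/
abbrev LblN := Lex (ℕ × ℕ)

instance : Inhabited LblN := ⟨toLex default⟩

/-- The labeling map φ_w : each occurrence of the integer `k` gets subscripts 1, 2, ...
from left to right. -/
def phiW (w : List ℕ) : List LblN :=
  w.zipIdx.map fun p => toLex (p.1, (w.take p.2).count p.1 + 1)

/-- The label-forgetting map, sending `k_l` to `k`. -/
def forgetW (w : List LblN) : List ℕ := w.map fun x => (ofLex x).1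

/-! ## Partitions, skew shapes, tableaux -/

/-- A partition, recorded as its sequence of (1-indexed) row lengths, with `p 0 = 0`. -/
def IsPartition (p : ℕ → ℕ) : Prop :=
  p 0 = 0 ∧ (∀ i, 1 ≤ i → p (i + 1) ≤ p i) ∧ ∃ N, ∀ i, N ≤ i → p i = 0

/-- The empty partition. -/
def zeroPart : ℕ → ℕ := fun _ => 0

/-- The boxes of the skew diagram λ/μ (rows and columns indexed from 1). -/
def cells (lam mu : ℕ → ℕ) : Set (ℕ × ℕ) :=
  {c | 1 ≤ c.1 ∧ mu c.1 < c.2 ∧ c.2 ≤ lam c.1}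

/-- The semistandardness condition for a filling of λ/μ: rows weakly increase and
columns strictly increase. -/
def IsSSYT {α : Type*} [Preorder α] (lam mu : ℕ → ℕ) (T : ℕ × ℕ → α) : Prop :=
  (∀ i j, (i, j) ∈ cells lam mu → (i, j + 1) ∈ cells lam mu → T (i, j) ≤ T (i, j + 1)) ∧
  (∀ i j, (i, j) ∈ cells lam mu → (i + 1, j) ∈ cells lam mu → T (i, j) < T (i + 1, j))

/-- The conjugate partition: `conj p j = #{i ≥ 1 | p i ≥ j}`. -/
noncomputable def conj (p : ℕ → ℕ) (j : ℕ) : ℕ :=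
  Set.ncard {i : ℕ | 1 ≤ i ∧ j ≤ p i}

/-- The number of (nonempty) rows of a shape. -/
noncomputable def numRows (lam : ℕ → ℕ) : ℕ :=
  sInf {N | ∀ i, N < i → lam i = 0}

/-- The i-th row of a tableau, read left to right. -/
def rowOf {α : Type*} (lam mu : ℕ → ℕ) (T : ℕ × ℕ → α) (i : ℕ) : List α :=
  (List.range (lam i - mu i)).map fun k => T (i, mu i + k + 1)

/-- Rows `n, n-1, ..., 1` of a tableau, concatenated. -/
def rowWordUpTo {α : Type*} (lam mu : ℕ → ℕ) (T : ℕ × ℕ → α) : ℕ → List α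
  | 0 => []
  | n + 1 => rowOf lam mu T (n + 1) ++ rowWordUpTo lam mu T n

/-- The row word of a tableau: rows read left to right, from the bottom row up. -/
noncomputable def rowWord {α : Type*} (lam mu : ℕ → ℕ) (T : ℕ × ℕ → α) : List α :=
  rowWordUpTo lam mu T (numRows lam)

/-- The rectification of a word: the (shape, tableau) pair of a normal-shape
semistandard tableau whose row word is Knuth equivalent to the given word. -/
noncomputable def rectPair {α : Type*} [LinearOrder α] [Inhabited α] (w : List α) :
    (ℕ → ℕ) × (ℕ × ℕ → α) := by
  classical
  exact if h : ∃ p : (ℕ → ℕ) × (ℕ × ℕ → α),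
      IsPartition p.1 ∧ IsSSYT p.1 zeroPart p.2 ∧ KnuthEquiv (rowWord p.1 zeroPart p.2) w
    then h.choose else (zeroPart, fun _ => default)

/-- The shape of the rectification of a word. -/
noncomputable def rectShape {α : Type*} [LinearOrder α] [Inhabited α] (w : List α) : ℕ → ℕ :=
  (rectPair w).1

/-- The tableau of the rectification of a word. -/
noncomputable def rectTab {α : Type*} [LinearOrder α] [Inhabited α] (w : List α) :
    ℕ × ℕ → α :=
  (rectPair w).2

/-- The labeling map φ_T on tableaux: each occurrence of the integer `k` gets subscripts
1, 2, ... from the bottom row up, left to right within each row. -/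
noncomputable def phiT (lam mu : ℕ → ℕ) (T : ℕ × ℕ → ℕ) : ℕ × ℕ → LblN :=
  fun c => toLex (T c,
    Set.ncard {d ∈ cells lam mu | T d = T c ∧ (c.1 < d.1 ∨ (d.1 = c.1 ∧ d.2 < c.2))} + 1)

/-! ## Arms and body -/

/-- `∑_{i ≥ 2} (λ_i − μ_i)`. -/
noncomputable def tailSum (lam mu : ℕ → ℕ) : ℕ :=
  ∑ᶠ i : ℕ, if 2 ≤ i then lam i - mu i else 0

/-- `m = min{λ₂, Σ_{i≥2}(λᵢ − μᵢ)}`. -/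
noncomputable def armM (lam mu : ℕ → ℕ) : ℕ := min (lam 2) (tailSum lam mu)

/-- `n = min{λ'₂, Σ_{j≥2}(λ'ⱼ − μ'ⱼ)}`. -/
noncomputable def armN (lam mu : ℕ → ℕ) : ℕ := min (conj lam 2) (tailSum (conj lam) (conj mu))

/-- The right-arm of λ/μ: boxes `(1, m+μ₁), ..., (1, λ₁)`. -/
noncomputable def rightArm (lam mu : ℕ → ℕ) : Set (ℕ × ℕ) :=
  {c | c.1 = 1 ∧ armM lam mu + mu 1 ≤ c.2 ∧ c.2 ≤ lam 1}

/-- The left-arm of λ/μ: boxes `(n+μ'₁, 1), ..., (λ'₁, 1)`. -/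
noncomputable def leftArm (lam mu : ℕ → ℕ) : Set (ℕ × ℕ) :=
  {c | c.2 = 1 ∧ armN lam mu + conj mu 1 ≤ c.1 ∧ c.1 ≤ conj lam 1}

/-- The body of λ/μ: the boxes that are in neither arm. -/
noncomputable def body (lam mu : ℕ → ℕ) : Set (ℕ × ℕ) :=
  cells lam mu \ (rightArm lam mu ∪ leftArm lam mu)

/-! ## Semistandard tableaux over positive integers, Schur multiple zeta functions -/

/-- Semistandard Young tableaux of shape λ/μ with positive integer entries,
normalized to be `0` outside the diagram. -/
def SSYTset (lam mu : ℕ → ℕ) : Set (ℕ × ℕ → ℕ) :=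
  {T | IsSSYT lam mu T ∧ (∀ c ∈ cells lam mu, 1 ≤ T c) ∧ ∀ c, c ∉ cells lam mu → T c = 0}

/-- The Schur multiple zeta function of shape λ/μ. -/
noncomputable def schurZeta (lam mu : ℕ → ℕ) (s : ℕ × ℕ → ℂ) : ℂ :=
  ∑' M : SSYTset lam mu, ∏ᶠ c ∈ cells lam mu, ((M : ℕ × ℕ → ℕ) c : ℂ) ^ (-(s c))

/-- A corner of λ/μ. -/
def ShapeCorner (lam mu : ℕ → ℕ) (c : ℕ × ℕ) : Prop :=
  c ∈ cells lam mu ∧ (c.1 + 1, c.2) ∉ cells lam mu ∧ (c.1, c.2 + 1) ∉ cells lam mu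

/-- The domain of absolute convergence `W_{λ/μ}`. -/
def InDomain (lam mu : ℕ → ℕ) (s : ℕ × ℕ → ℂ) : Prop :=
  ∀ c ∈ cells lam mu, 1 ≤ (s c).re ∧ (ShapeCorner lam mu c → 1 < (s c).re)

/-! ## The shape μ * ν -/

/-- The outer shape ψ of μ * ν: `ψᵢ = μ₁ + νᵢ` for `i ≤ ℓ(ν)`, `ψᵢ = μ_{i−ℓ(ν)}` else. -/
noncomputable def starOuter (mu nu : ℕ → ℕ) : ℕ → ℕ := fun i =>
  if i = 0 then 0 else if i ≤ conj nu 1 then mu 1 + nu i else mu (i - conj nu 1)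

/-- The inner (rectangle) shape of μ * ν : μ₁ columns and ν'₁ rows. -/
noncomputable def starInner (mu nu : ℕ → ℕ) : ℕ → ℕ := fun i =>
  if 1 ≤ i ∧ i ≤ conj nu 1 then mu 1 else 0

/-- The filling `S * T` of μ * ν : `S` (shape μ) below, `T` (shape ν) to the right. -/
noncomputable def starTab {γ : Type*} (mu nu : ℕ → ℕ) (s t : ℕ × ℕ → γ) : ℕ × ℕ → γ :=
  fun c => if c.1 ≤ conj nu 1 then t (c.1, c.2 - mu 1) else s (c.1 - conj nu 1, c.2)

/-! ## Schur functions as formal power series, Littlewood–Richardson coefficients -/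

/-- The (skew) Schur function `s_{λ/μ}` as a formal power series in variables
`x₀, x₁, x₂, ...` : the coefficient of a monomial `d` is the number of semistandard
tableaux of shape λ/μ and content `d`. -/
noncomputable def schurSeries (lam mu : ℕ → ℕ) : MvPowerSeries ℕ ℤ :=
  fun d => (Set.ncard {T ∈ SSYTset lam mu |
    ∀ k : ℕ, d k = Set.ncard {c ∈ cells lam mu | T c = k}} : ℤ)

/-- The power series `Σ_λ c_λ · s_λ`, the sum ranging over all partitions λ. -/
noncomputable def seriesSum (cc : (ℕ → ℕ) → ℕ) : MvPowerSeries ℕ ℤ :=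
  fun d => ∑ᶠ lam ∈ {p : ℕ → ℕ | IsPartition p}, (cc lam : ℤ) * schurSeries lam zeroPart d

/-! ## Jeu de taquin slides -/

/-- One elementary jeu de taquin slide on a configuration (hole, filled region, filling):
the smaller of the entries to the right of and below the hole moves into the hole
(the one below moving in case of a tie), and the hole moves to the vacated box. -/
inductive JdtStep {α : Type*} [LinearOrder α] :
    ((ℕ × ℕ) × Set (ℕ × ℕ) × (ℕ × ℕ → α)) → ((ℕ × ℕ) × Set (ℕ × ℕ) × (ℕ × ℕ → α)) → Prop
  | right (h : ℕ × ℕ) (S : Set (ℕ × ℕ)) (T : ℕ × ℕ → α)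
      (hr : (h.1, h.2 + 1) ∈ S)
      (hcmp : (h.1 + 1, h.2) ∈ S → T (h.1, h.2 + 1) < T (h.1 + 1, h.2)) :
      JdtStep (h, S, T)
        ((h.1, h.2 + 1), insert h (S \ {(h.1, h.2 + 1)}),
          Function.update T h (T (h.1, h.2 + 1)))
  | down (h : ℕ × ℕ) (S : Set (ℕ × ℕ)) (T : ℕ × ℕ → α)
      (hd : (h.1 + 1, h.2) ∈ S)
      (hcmp : (h.1, h.2 + 1) ∈ S → T (h.1 + 1, h.2) ≤ T (h.1, h.2 + 1)) :
      JdtStep (h, S, T)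
        ((h.1 + 1, h.2), insert h (S \ {(h.1 + 1, h.2)}),
          Function.update T h (T (h.1 + 1, h.2)))

/-- An inside corner of λ/μ: a corner `c` of the deleted diagram μ. -/
def InsideCorner (lam mu : ℕ → ℕ) (c : ℕ × ℕ) : Prop :=
  1 ≤ c.1 ∧ 1 ≤ c.2 ∧ c.2 = mu c.1 ∧ mu (c.1 + 1) < c.2

/-- A full jeu de taquin slide from an inside corner, acting on (outer shape, inner
shape, filling) triples: the hole starts at an inside corner `c`, elementary slides are
repeated until the hole has no neighbor to its right or below, and then the hole
(at an outside corner `h`) is removed. -/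
def SlideRel {α : Type*} [LinearOrder α] :
    ((ℕ → ℕ) × (ℕ → ℕ) × (ℕ × ℕ → α)) → ((ℕ → ℕ) × (ℕ → ℕ) × (ℕ × ℕ → α)) → Prop :=
  fun p q =>
    ∃ c h : ℕ × ℕ, InsideCorner p.1 p.2.1 c ∧
      Relation.ReflTransGen JdtStep (c, cells p.1 p.2.1, p.2.2)
        (h, insert c (cells p.1 p.2.1) \ {h}, q.2.2) ∧
      (h.1, h.2 + 1) ∉ insert c (cells p.1 p.2.1) ∧
      (h.1 + 1, h.2) ∉ insert c (cells p.1 p.2.1) ∧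
      h.2 = p.1 h.1 ∧
      q.1 = Function.update p.1 h.1 (h.2 - 1) ∧
      q.2.1 = Function.update p.2.1 c.1 (c.2 - 1)


/-! ### Auxiliary development for Statement 5 -/

/-- The list of cells of row `i`, left to right. -/
def cellRow (lam mu : ℕ → ℕ) (i : ℕ) : List (ℕ × ℕ) :=
  (List.range (lam i - mu i)).map fun k => (i, mu i + k + 1)

/-- The list of cells of rows `n, n-1, ..., 1`, each left to right. -/
def cellWord (lam mu : ℕ → ℕ) : ℕ → List (ℕ × ℕ)
  | 0 => []
  | n + 1 => cellRow lam mu (n + 1) ++ cellWord lam mu n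

lemma rowWordUpTo_eq_map {α : Type*} (lam mu : ℕ → ℕ) (T : ℕ × ℕ → α) (n : ℕ) :
    rowWordUpTo lam mu T n = (cellWord lam mu n).map T := by
  induction n with
  | zero => rfl
  | succ n ih =>
      simp only [rowWordUpTo, cellWord, List.map_append, ih, rowOf, cellRow, List.map_map]
      rfl

lemma mem_cellWord {lam mu : ℕ → ℕ} (hsub : ∀ i, mu i ≤ lam i) {n : ℕ} {d : ℕ × ℕ} :
    d ∈ cellWord lam mu n ↔ 1 ≤ d.1 ∧ d.1 ≤ n ∧ mu d.1 < d.2 ∧ d.2 ≤ lam d.1 := by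
  induction n with
  | zero => simp [cellWord]; omega
  | succ n ih =>
      simp only [cellWord, List.mem_append, ih, cellRow, List.mem_map, List.mem_range]
      constructor
      · rintro (⟨k, hk, rfl⟩ | ⟨h1, h2, h3, h4⟩)
        · have := hsub (n + 1); simp only; omega
        · omega
      · rintro ⟨h1, h2, h3, h4⟩
        rcases Nat.lt_or_ge d.1 (n + 1) with h | h
        · right; omega
        · left
          refine ⟨d.2 - mu (n + 1) - 1, ?_, ?_⟩
          · have : d.1 = n + 1 := by omega
            rw [this] at h3 h4; omega
          · have h5 : d.1 = n + 1 := by omega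
            have : mu (n + 1) + (d.2 - mu (n + 1) - 1) + 1 = d.2 := by
              rw [h5] at h3; omega
            rw [this, ← h5]

/-- The "read before" relation on cells: `a` is read before `b` in the row word. -/
def RdBefore (a b : ℕ × ℕ) : Prop := b.1 < a.1 ∨ (a.1 = b.1 ∧ a.2 < b.2)

lemma fst_le_of_mem_cellWord {lam mu : ℕ → ℕ} {n : ℕ} {d : ℕ × ℕ}
    (hd : d ∈ cellWord lam mu n) : d.1 ≤ n := by
  induction n with
  | zero => simp [cellWord] at hd
  | succ m ihm =>
      rw [cellWord, List.mem_append] at hd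
      rcases hd with hd | hd
      · simp only [cellRow, List.mem_map, List.mem_range] at hd
        obtain ⟨k, _, rfl⟩ := hd; omega
      · have := ihm hd; omega

lemma pairwise_cellWord (lam mu : ℕ → ℕ) (n : ℕ) :
    (cellWord lam mu n).Pairwise RdBefore := by
  induction n with
  | zero => simp [cellWord]
  | succ n ih =>
      rw [cellWord, List.pairwise_append]
      refine ⟨?_, ih, ?_⟩
      · rw [cellRow, List.pairwise_map]
        exact List.pairwise_lt_range.imp fun h => Or.inr ⟨rfl, by omega⟩
      · intro a ha b hb
        simp only [cellRow, List.mem_map, List.mem_range] at ha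
        obtain ⟨k, _, rfl⟩ := ha
        have hb1 : b.1 ≤ n := fst_le_of_mem_cellWord hb
        exact Or.inl (by simpa using by omega)

lemma rdBefore_irrefl (a : ℕ × ℕ) : ¬ RdBefore a a := by
  simp [RdBefore]

lemma rdBefore_asymm {a b : ℕ × ℕ} (h : RdBefore a b) : ¬ RdBefore b a := by
  rcases h with h | ⟨h1, h2⟩ <;> rintro (h' | ⟨h1', h2'⟩) <;> omega

lemma nodup_cellWord (lam mu : ℕ → ℕ) (n : ℕ) : (cellWord lam mu n).Nodup :=
  (pairwise_cellWord lam mu n).imp fun h => by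
    rintro rfl; exact rdBefore_irrefl _ h

theorem rowWord_phiT (lam mu : ℕ → ℕ) (hlam : IsPartition lam) (hmu : IsPartition mu)
    (hsub : ∀ i, mu i ≤ lam i) (L : ℕ × ℕ → ℕ) (hL : L ∈ SSYTset lam mu) :
    rowWord lam mu (phiT lam mu L) = phiW (rowWord lam mu L) := by
  classical
  set n := numRows lam with hn
  set l := cellWord lam mu n with hldef
  have hrw : ∀ {α : Type} (T : ℕ × ℕ → α), rowWord lam mu T = l.map T := fun T =>
    rowWordUpTo_eq_map lam mu T n
  -- `lam i = 0` beyond `numRows lam`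
  have hzero : ∀ i, n < i → lam i = 0 := by
    have hne : {N | ∀ i, N < i → lam i = 0}.Nonempty := by
      obtain ⟨N, hN⟩ := hlam.2.2
      exact ⟨N, fun i hi => hN i hi.le⟩
    exact Nat.sInf_mem hne
  -- cells of the diagram = members of the cell list
  have hmemcells : ∀ d : ℕ × ℕ, d ∈ cells lam mu ↔ d ∈ l := by
    intro d
    rw [hldef, mem_cellWord hsub]
    constructor
    · rintro ⟨h1, h2, h3⟩
      have : d.1 ≤ n := by
        by_contra hc
        have := hzero d.1 (by omega)
        omega
      exact ⟨h1, this, h2, h3⟩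
    · rintro ⟨h1, _, h3, h4⟩; exact ⟨h1, h3, h4⟩
  have hnd : l.Nodup := nodup_cellWord lam mu n
  have hpw : ∀ (i j : ℕ) (hi : i < l.length) (hj : j < l.length), i < j →
      RdBefore l[i] l[j] := List.pairwise_iff_getElem.mp (pairwise_cellWord lam mu n)
  rw [hrw, hrw]
  apply List.ext_getElem
  · simp [phiW]
  intro i h1 h2
  have hil : i < l.length := by simpa using h1
  simp only [List.getElem_map, phiW, List.getElem_zipIdx, zero_add]
  set c := l[i] with hc
  -- membership in the prefix ↔ read-before
  have key : ∀ d, d ∈ l → (d ∈ l.take i ↔ RdBefore d c) := by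
    intro d hd
    obtain ⟨j, hjl, rfl⟩ := List.mem_iff_getElem.mp hd
    constructor
    · intro hmem
      obtain ⟨j', hj', hj'e⟩ := List.mem_iff_getElem.mp hmem
      have hj'i : j' < i := by
        have := hj'; simp [List.length_take] at this; omega
      rw [List.getElem_take] at hj'e
      rw [← hj'e]
      exact hpw j' i (by omega) hil hj'i
    · intro hrb
      rcases lt_trichotomy j i with h | h | h
      · have : (l.take i)[j]'(by simp [List.length_take]; omega) = l[j] :=
          List.getElem_take
        rw [← this]
        exact List.getElem_mem _
      · subst h
        exact absurd hrb (by rw [← hc]; exact rdBefore_irrefl c)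
      · exact absurd hrb (rdBefore_asymm (hpw i j hil hjl h))
  -- the counting
  show phiT lam mu L c = toLex (L c, (List.take i (List.map L l)).count (L c) + 1)
  unfold phiT
  refine congrArg toLex (Prod.ext rfl ?_)
  simp only
  congr 1
  -- ncard of the set of earlier equal-entry cells = count in the prefix
  have hseteq : {d ∈ cells lam mu | L d = L c ∧ (c.1 < d.1 ∨ (d.1 = c.1 ∧ d.2 < c.2))} =
      {x | x ∈ (l.take i).filter fun d => decide (L d = L c)} := by
    ext d
    simp only [Set.mem_setOf_eq, List.mem_filter, decide_eq_true_eq]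
    constructor
    · rintro ⟨hd, hLd, hrb⟩
      have hdl : d ∈ l := (hmemcells d).mp hd
      exact ⟨(key d hdl).mpr hrb, hLd⟩
    · rintro ⟨hmem, hLd⟩
      have hdl : d ∈ l := List.mem_of_mem_take hmem
      exact ⟨(hmemcells d).mpr hdl, hLd, (key d hdl).mp hmem⟩
  rw [hseteq]
  have hndf : ((l.take i).filter fun d => decide (L d = L c)).Nodup :=
    (((l.take i).filter_sublist).trans (l.take_sublist i)).nodup hnd
  rw [show {x | x ∈ (l.take i).filter fun d => decide (L d = L c)} =
      (((l.take i).filter fun d => decide (L d = L c)).toFinset : Set (ℕ × ℕ)) by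
        rw [List.coe_toFinset],
    Set.ncard_coe_finset, List.toFinset_card_of_nodup hndf]
  -- count side
  rw [← List.map_take]
  rw [List.count_eq_countP, List.countP_map, List.countP_eq_length_filter]
  congr 1
end

section
/- In a skew tableau with distinct entries, performing jeu de taquin slides that clear all rows strictly below the first row yields a tableau whose second row has length at most min{λ₂, Σ_{i≥2}(λᵢ − μᵢ)}, and whose first row is unchanged. -/
open scoped BigOperators

/-! ### Auxiliary lemmas -/

private lemma jdt_chain_inv {α : Type*} [LinearOrder α] (c : ℕ × ℕ) (S0 : Set (ℕ × ℕ))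
    (U : ℕ × ℕ → α) (hc : c ∉ S0) :
    ∀ s : (ℕ × ℕ) × Set (ℕ × ℕ) × (ℕ × ℕ → α),
      Relation.ReflTransGen JdtStep (c, S0, U) s →
      s.2.1 = insert c S0 \ {s.1} ∧ s.1 ∈ insert c S0 ∧ c.1 ≤ s.1.1 ∧ c.2 ≤ s.1.2 ∧
        (2 ≤ c.1 → ∀ j, s.2.2 (1, j) = U (1, j)) := by
  intro s hs
  induction hs with
  | refl =>
    exact ⟨(Set.insert_diff_self_of_notMem hc).symm, Set.mem_insert _ _, le_rfl, le_rfl,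
      fun _ _ => rfl⟩
  | tail hab hbc ih =>
    cases hbc with
    | right h S T hr hcmp =>
      obtain ⟨hS, hmem, hr1, hr2, hU⟩ := ih
      dsimp only at hS hmem hr1 hr2 hU ⊢
      have hnh : ((h.1, h.2 + 1) : ℕ × ℕ) ≠ h := by
        intro e; have := congrArg Prod.snd e; simp at this
      have hmem' : ((h.1, h.2 + 1) : ℕ × ℕ) ∈ insert c S0 := by
        rw [hS] at hr; exact hr.1
      refine ⟨?_, hmem', hr1, le_trans hr2 (Nat.le_succ _), ?_⟩
      · rw [hS]
        ext x
        simp only [Set.mem_insert_iff, Set.mem_diff, Set.mem_singleton_iff]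
        constructor
        · rintro (rfl | ⟨⟨h1, h2⟩, h3⟩)
          · exact ⟨hmem, hnh.symm⟩
          · exact ⟨h1, h3⟩
        · rintro ⟨h1, h2⟩
          by_cases hx : x = h
          · exact Or.inl hx
          · exact Or.inr ⟨⟨h1, hx⟩, h2⟩
      · intro hc2 j
        rw [Function.update_of_ne, hU hc2]
        intro e
        have := congrArg Prod.fst e
        simp at this
        omega
    | down h S T hd hcmp =>
      obtain ⟨hS, hmem, hr1, hr2, hU⟩ := ih
      dsimp only at hS hmem hr1 hr2 hU ⊢
      have hnh : ((h.1 + 1, h.2) : ℕ × ℕ) ≠ h := by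
        intro e; have := congrArg Prod.fst e; simp at this
      have hmem' : ((h.1 + 1, h.2) : ℕ × ℕ) ∈ insert c S0 := by
        rw [hS] at hd; exact hd.1
      refine ⟨?_, hmem', le_trans hr1 (Nat.le_succ _), hr2, ?_⟩
      · rw [hS]
        ext x
        simp only [Set.mem_insert_iff, Set.mem_diff, Set.mem_singleton_iff]
        constructor
        · rintro (rfl | ⟨⟨h1, h2⟩, h3⟩)
          · exact ⟨hmem, hnh.symm⟩
          · exact ⟨h1, h3⟩
        · rintro ⟨h1, h2⟩
          by_cases hx : x = h
          · exact Or.inl hx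
          · exact Or.inr ⟨⟨h1, hx⟩, h2⟩
      · intro hc2 j
        rw [Function.update_of_ne, hU hc2]
        intro e
        have := congrArg Prod.fst e
        simp at this
        omega

private lemma tailSum_eq_sum (L M : ℕ → ℕ) (N : ℕ) (h : ∀ i, N ≤ i → L i = 0) :
    tailSum L M = ∑ i ∈ Finset.range N, if 2 ≤ i then L i - M i else 0 := by
  unfold tailSum
  apply finsum_eq_sum_of_support_subset
  intro i hi
  simp only [Function.mem_support] at hi
  simp only [Finset.coe_range, Set.mem_Iio]
  by_contra hN
  push_neg at hN
  rw [h i hN] at hi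
  simp at hi

theorem slides_below_first_row {α : Type*} [LinearOrder α] (lam mu psi mu' : ℕ → ℕ)
    (T T' : ℕ × ℕ → α)
    (hlam : IsPartition lam) (hmu : IsPartition mu) (hsub : ∀ i, mu i ≤ lam i)
    (hT : IsSSYT lam mu T) (hinj : Set.InjOn T (cells lam mu))
    (hchain : Relation.ReflTransGen SlideRel (lam, mu, T) (psi, mu', T'))
    (hmu'1 : mu' 1 = mu 1) (hmu'rest : ∀ i, 2 ≤ i → mu' i = 0) :
    psi 2 ≤ min (lam 2) (tailSum lam mu) ∧ psi 1 = lam 1 ∧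
      ∀ j, mu 1 < j → j ≤ lam 1 → T' (1, j) = T (1, j) := by
  obtain ⟨-, -, N, hN⟩ := hlam
  have key : ∀ s : (ℕ → ℕ) × (ℕ → ℕ) × (ℕ × ℕ → α),
      Relation.ReflTransGen SlideRel (lam, mu, T) s →
      (∀ i, s.2.1 i ≤ s.1 i) ∧ (∀ i, s.1 i ≤ lam i) ∧
      (mu 1 ≤ s.2.1 1 →
        s.2.1 1 = mu 1 ∧ s.1 1 = lam 1 ∧ tailSum s.1 s.2.1 ≤ tailSum lam mu ∧
        ∀ j, s.2.2 (1, j) = T (1, j)) := by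
    intro s hs
    induction hs with
    | refl => exact ⟨hsub, fun i => le_refl _, fun _ => ⟨rfl, rfl, le_refl _, fun j => rfl⟩⟩
    | @tail b s' hab hbc ih =>
      obtain ⟨L, M, U⟩ := b
      obtain ⟨L', M', U'⟩ := s'
      obtain ⟨cc, hh, hcorner, hchn, hnr, hnd, hout, hL', hM'⟩ := hbc
      obtain ⟨c1, c2⟩ := cc
      obtain ⟨h1, h2⟩ := hh
      obtain ⟨hcA, hcB, hcC, hcD⟩ := hcorner
      try dsimp only at hcA hcB hcC hcD hout hL' hM' hchn ⊢
      have hcnot : ((c1, c2) : ℕ × ℕ) ∉ cells L M := by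
        simp only [cells, Set.mem_setOf_eq]
        omega
      obtain ⟨-, hmem, hrow1, hcol1, hUrow⟩ :=
        jdt_chain_inv (c1, c2) (cells L M) U hcnot _ hchn
      try dsimp only at hmem hrow1 hcol1 hUrow
      have hmem' : (h1 = c1 ∧ h2 = c2) ∨ (1 ≤ h1 ∧ M h1 < h2 ∧ h2 ≤ L h1) := by
        rcases Set.mem_insert_iff.mp hmem with heq | hcell
        · left; exact ⟨congrArg Prod.fst heq, congrArg Prod.snd heq⟩
        · right; simpa [cells] using hcell
      obtain ⟨hML, hLlam, hgate⟩ := ih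
      dsimp only at hML hLlam hgate
      have hML' : ∀ i, M' i ≤ L' i := by
        intro i
        rw [hL', hM', Function.update_apply, Function.update_apply]
        by_cases i1 : i = c1
        · rw [if_pos i1]
          by_cases i2 : i = h1
          · rw [if_pos i2]; omega
          · rw [if_neg i2, i1]
            have := hML c1
            omega
        · rw [if_neg i1]
          by_cases i2 : i = h1
          · rw [if_pos i2, i2]
            rcases hmem' with ⟨u1, u2⟩ | ⟨u1, u2, u3⟩ <;> omega
          · rw [if_neg i2]; exact hML i
      have hLlam' : ∀ i, L' i ≤ lam i := by
        intro i
        rw [hL', Function.update_apply]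
        by_cases i1 : i = h1
        · rw [if_pos i1, i1]
          have := hLlam h1
          omega
        · rw [if_neg i1]; exact hLlam i
      refine ⟨hML', hLlam', ?_⟩
      intro hgate'
      rw [hM', Function.update_apply] at hgate'
      have hMle : mu 1 ≤ M 1 := by
        split_ifs at hgate' with e
        · rw [← e] at hcC; omega
        · exact hgate'
      obtain ⟨hM1, hL1, htail, hrowT⟩ := hgate hMle
      have hc1 : 2 ≤ c1 := by
        rcases Nat.lt_or_ge c1 2 with h | h
        · exfalso
          have : c1 = 1 := by omega
          subst this
          rw [if_pos rfl] at hgate'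
          omega
        · exact h
      have hh1 : 2 ≤ h1 := le_trans hc1 hrow1
      refine ⟨?_, ?_, ?_, ?_⟩
      · rw [hM', Function.update_apply, if_neg (by omega), hM1]
      · rw [hL', Function.update_apply, if_neg (by omega), hL1]
      · -- tail sum
        have hNL : ∀ i, N ≤ i → L i = 0 := fun i hi =>
          Nat.le_antisymm ((hLlam i).trans (le_of_eq (hN i hi))) (Nat.zero_le _)
        have hNL' : ∀ i, N ≤ i → L' i = 0 := fun i hi =>
          Nat.le_antisymm ((hLlam' i).trans (le_of_eq (hN i hi))) (Nat.zero_le _)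
        refine le_trans ?_ htail
        rw [tailSum_eq_sum L' M' N hNL', tailSum_eq_sum L M N hNL]
        have hc1N : c1 < N := by
          by_contra hcon
          push_neg at hcon
          have e1 := hNL c1 hcon
          have e2 := hML c1
          omega
        have hh2c2 : h2 = L h1 := hout
        have hh1N : h1 < N := by
          by_contra hcon
          push_neg at hcon
          have e1 := hNL h1 hcon
          omega
        by_cases hch : c1 = h1
        · apply le_of_eq
          refine Finset.sum_congr rfl fun i _ => ?_
          rw [hL', hM', Function.update_apply, Function.update_apply]
          by_cases i1 : i = c1
          · have i2 : i = h1 := i1.trans hch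
            rw [if_pos i1, if_pos i2]
            have e0 := hML i
            have eL : L i = L h1 := by rw [i2]
            have eM : M i = M h1 := by rw [i2]
            have eM2 : M i = c2 := by rw [i1, ← hcC]
            have eL2 : L i = h2 := by rw [i2, ← hout]
            rcases hmem' with ⟨u1, u2⟩ | ⟨u1, u2, u3⟩ <;> split_ifs <;> omega
          · have i2 : i ≠ h1 := fun e => i1 (e.trans hch.symm)
            rw [if_neg i1, if_neg i2]
        · have hhc : ¬(h1 = c1 ∧ h2 = c2) := fun ⟨e, _⟩ => hch e.symm
          have hcell : 1 ≤ h1 ∧ M h1 < h2 ∧ h2 ≤ L h1 := by tauto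
          have hsplit : ∀ g : ℕ → ℕ, ∑ i ∈ Finset.range N, g i =
              g c1 + (g h1 + ∑ i ∈ ((Finset.range N).erase c1).erase h1, g i) := by
            intro g
            rw [Finset.add_sum_erase _ g
              (Finset.mem_erase.mpr ⟨fun e => hch e.symm, Finset.mem_range.mpr hh1N⟩),
              Finset.add_sum_erase _ g (Finset.mem_range.mpr hc1N)]
          rw [hsplit, hsplit]
          have hrest : ∑ i ∈ ((Finset.range N).erase c1).erase h1,
                (if 2 ≤ i then L' i - M' i else 0) =
              ∑ i ∈ ((Finset.range N).erase c1).erase h1,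
                (if 2 ≤ i then L i - M i else 0) := by
            apply Finset.sum_congr rfl
            intro i hi
            simp only [Finset.mem_erase] at hi
            rw [hL', hM', Function.update_apply, Function.update_apply,
              if_neg hi.1, if_neg hi.2.1]
          rw [hrest]
          have v1 : (if 2 ≤ c1 then L' c1 - M' c1 else 0) = L c1 - (c2 - 1) := by
            rw [if_pos hc1, hL', hM', Function.update_apply, Function.update_apply,
              if_pos rfl, if_neg hch]
          have v2 : (if 2 ≤ h1 then L' h1 - M' h1 else 0) = (h2 - 1) - M h1 := by
            rw [if_pos hh1, hL', hM', Function.update_apply, Function.update_apply,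
              if_pos rfl, if_neg (fun e => hch e.symm)]
          rw [v1, v2, if_pos hc1, if_pos hh1]
          have := hML c1
          omega
      · intro j
        rw [hUrow hc1 j, hrowT j]
  obtain ⟨hMLf, hLlamf, hgatef⟩ := key (psi, mu', T') hchain
  try dsimp only at hMLf hLlamf hgatef
  obtain ⟨-, hpsi1, htail, hrow⟩ := hgatef (le_of_eq hmu'1.symm)
  refine ⟨le_min ?_ ?_, hpsi1, fun j _ _ => hrow j⟩
  · exact hLlamf 2
  · have h20 : mu' 2 = 0 := hmu'rest 2 le_rfl
    have hfin : (Function.support fun i => if 2 ≤ i then psi i - mu' i else 0).Finite := by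
      apply Set.Finite.subset (Finset.range N).finite_toSet
      intro i hi
      simp only [Function.mem_support] at hi
      simp only [Finset.coe_range, Set.mem_Iio]
      by_contra hcon
      push_neg at hcon
      have e1 := hN i hcon
      have e2 := hLlamf i
      split_ifs at hi <;> omega
    have hsingle := single_le_finsum 2 hfin
      (fun j => Nat.zero_le (if 2 ≤ j then psi j - mu' j else 0))
    simp only [le_refl, if_pos, h20, Nat.sub_zero] at hsingle
    exact le_trans hsingle htail
end
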